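/- For every n ≥ 0 and every symmetric integral polytope P in ℝ^n, there exist integral polytopes Q and R in ℝ^n such that P + Q + (-Q) = R + (-R) (Minkowski sums). Equivalently, in the Grothendieck group of the monoid of integral polytopes under Minkowski sum, every symmetric element is a norm: 𝔊^sym(n) = 𝔊^norm(n). -/

import Mathlib

open Pointwise

/-- An integral polytope in `ℝ^n`: the convex hull of a nonempty finite set of
points all of whose coordinates are integers. -/
def IsIntegralPolytope {n : ℕ} (P : Set (Fin n → ℝ)) : Prop :=
  ∃ S : Finset (Fin n → ℝ), S.Nonempty ∧ (∀ x ∈ S, ∀ i, ∃ m : ℤ, x i = (m : ℝ)) ∧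
    P = convexHull ℝ (S : Set (Fin n → ℝ))

namespace SymNormAux

lemma j1 {α : Type*} [AddCommMonoid α] (a b c d : α) : a + (b + c + d) = (a + b) + (c + d) := by
  abel

lemma j2 {α : Type*} [AddCommMonoid α] (a b c d : α) :
    (a + b) + (c + d) = (a + c) + (d + b) := by abel

variable {E : Type*} [AddCommGroup E] [Module ℝ E]

/-- In a real vector space, a nonzero vector differs from its negative. -/
lemma ne_neg_of_ne_zero {v : E} (hv : v ≠ 0) : v ≠ -v := by
  intro h
  apply hv
  have h2 : v + v = 0 := by nth_rewrite 2 [h]; exact add_neg_cancel v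
  have h2' : (2 : ℝ) • v = 0 := by rw [two_smul]; exact h2
  rcases smul_eq_zero.1 h2' with h | h
  · norm_num at h
  · exact h

/-- Decompose a sum over a finset into three distinguished elements plus the rest. -/
lemma sum_split3 {M : Type*} [DecidableEq E] [AddCommMonoid M] {S : Finset E} {a b c : E}
    (ha : a ∈ S) (hb : b ∈ S) (hc : c ∈ S) (hab : a ≠ b) (hac : a ≠ c) (hbc : b ≠ c)
    (f : E → M) :
    ∑ y ∈ S, f y = f a + f b + f c + ∑ y ∈ ((S.erase a).erase b).erase c, f y := by
  have hb' : b ∈ S.erase a := Finset.mem_erase.2 ⟨hab.symm, hb⟩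
  have hc' : c ∈ (S.erase a).erase b :=
    Finset.mem_erase.2 ⟨hbc.symm, Finset.mem_erase.2 ⟨hac.symm, hc⟩⟩
  rw [← Finset.add_sum_erase _ f ha, ← Finset.add_sum_erase _ f hb',
    ← Finset.add_sum_erase _ f hc']
  abel

/-- Membership in a convex hull of a finset from explicit weights. -/
lemma mem_hull_of_weights {S : Finset E} {w : E → ℝ} {x : E}
    (h0 : ∀ y ∈ S, 0 ≤ w y) (h1 : ∑ y ∈ S, w y = 1) (hx : ∑ y ∈ S, w y • y = x) :
    x ∈ convexHull ℝ (S : Set E) := by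
  rw [Finset.mem_convexHull]
  refine ⟨w, h0, h1, ?_⟩
  rw [Finset.centerMass_eq_of_sum_1 _ _ h1]
  simpa using hx

/-- Weights from membership in a convex hull of a finset. -/
lemma weights_of_mem_hull {S : Finset E} {x : E} (hx : x ∈ convexHull ℝ (S : Set E)) :
    ∃ w : E → ℝ, (∀ y ∈ S, 0 ≤ w y) ∧ ∑ y ∈ S, w y = 1 ∧ ∑ y ∈ S, w y • y = x := by
  rw [Finset.mem_convexHull] at hx
  obtain ⟨w, h0, h1, hx⟩ := hx
  refine ⟨w, h0, h1, ?_⟩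
  rw [Finset.centerMass_eq_of_sum_1 _ _ h1] at hx
  simpa using hx

/-- The transfer trick: move weight `c` simultaneously off `v` and `-v` onto `0`. -/
lemma transfer [DecidableEq E] {S : Finset E} {v : E}
    (hv : v ∈ S) (hnv : -v ∈ S) (h0S : (0 : E) ∈ S) (hvne : v ≠ 0)
    {w : E → ℝ} (hw0 : ∀ y ∈ S, 0 ≤ w y) (hw1 : ∑ y ∈ S, w y = 1)
    {x : E} (hx : ∑ y ∈ S, w y • y = x) {c : ℝ} (hc0 : 0 ≤ c) (hcv : c ≤ w v)
    (hcnv : c ≤ w (-v)) :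
    ∃ w' : E → ℝ, (∀ y ∈ S, 0 ≤ w' y) ∧ (∑ y ∈ S, w' y = 1) ∧ (∑ y ∈ S, w' y • y = x) ∧
      w' v = w v - c ∧ w' (-v) = w (-v) - c := by
  have hvnv : v ≠ -v := ne_neg_of_ne_zero hvne
  have hv0 : v ≠ 0 := hvne
  have hnv0 : -v ≠ 0 := fun h => hvne (neg_eq_zero.1 h)
  set w' : E → ℝ := fun y =>
    if y = v then w v - c else if y = -v then w (-v) - c else
      if y = 0 then w 0 + 2 * c else w y with hw'def
  have hw'v : w' v = w v - c := by simp [hw'def]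
  have hw'nv : w' (-v) = w (-v) - c := by simp [hw'def, hvnv.symm]
  have hw'0 : w' 0 = w 0 + 2 * c := by
    simp [hw'def, hv0.symm, hnv0.symm]
  have hrest : ∀ y ∈ ((S.erase v).erase (-v)).erase 0, w' y = w y := by
    intro y hy
    have hy0 : y ≠ 0 := (Finset.mem_erase.1 hy).1
    have hynv : y ≠ -v := (Finset.mem_erase.1 (Finset.mem_erase.1 hy).2).1
    have hyv : y ≠ v := (Finset.mem_erase.1 (Finset.mem_erase.1 (Finset.mem_erase.1 hy).2).2).1
    simp [hw'def, hyv, hynv, hy0]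
  refine ⟨w', ?_, ?_, ?_, hw'v, hw'nv⟩
  · intro y hy
    by_cases h1 : y = v
    · subst h1; rw [hw'v]; linarith
    by_cases h2 : y = -v
    · subst h2; rw [hw'nv]; linarith
    by_cases h3 : y = 0
    · subst h3; rw [hw'0]; have := hw0 0 h0S; linarith
    · simp only [hw'def, h1, h2, h3, if_false]; exact hw0 y hy
  · rw [sum_split3 hv hnv h0S hvnv hv0 hnv0 w']
    rw [sum_split3 hv hnv h0S hvnv hv0 hnv0 w] at hw1
    rw [Finset.sum_congr rfl hrest, hw'v, hw'nv, hw'0]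
    linarith
  · rw [sum_split3 hv hnv h0S hvnv hv0 hnv0 (fun y => w' y • y)]
    rw [sum_split3 hv hnv h0S hvnv hv0 hnv0 (fun y => w y • y)] at hx
    have hcongr : ∑ y ∈ ((S.erase v).erase (-v)).erase 0, w' y • y
        = ∑ y ∈ ((S.erase v).erase (-v)).erase 0, w y • y :=
      Finset.sum_congr rfl fun y hy => by rw [hrest y hy]
    rw [hcongr, hw'v, hw'nv, hw'0]
    rw [← hx]
    simp only [smul_zero, sub_smul, smul_neg]
    abel

/-- Membership in the hull after erasing `v` and `-v`, given vanishing weights there. -/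
lemma mem_double_erase [DecidableEq E] {S : Finset E} {v : E} (hv : v ∈ S) (hnv : -v ∈ S)
    {w : E → ℝ} {x : E} (h0 : ∀ y ∈ S, 0 ≤ w y) (h1 : ∑ y ∈ S, w y = 1)
    (hx : ∑ y ∈ S, w y • y = x) (hzv : w v = 0) (hznv : w (-v) = 0) :
    x ∈ convexHull ℝ (((S.erase v).erase (-v) : Finset E) : Set E) := by
  refine mem_hull_of_weights
    (fun y hy => h0 y (Finset.mem_of_mem_erase (Finset.mem_of_mem_erase hy))) ?_ ?_
  · rw [Finset.sum_erase _ hznv, Finset.sum_erase _ hzv]; exact h1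
  · rw [Finset.sum_erase (f := fun y => w y • y) _ (by simp [hznv]),
        Finset.sum_erase (f := fun y => w y • y) _ (by simp [hzv])]
    exact hx

/-- Covering: every point of the hull of a symmetric set lies in the hull with `-v`
removed or in the hull with `v` removed. -/
lemma cover [DecidableEq E] {S : Finset E} (h0S : (0 : E) ∈ S)
    {v : E} (hv : v ∈ S) (hnv : -v ∈ S) (hvne : v ≠ 0) {x : E}
    (hx : x ∈ convexHull ℝ (S : Set E)) :
    x ∈ convexHull ℝ ((S.erase (-v) : Finset E) : Set E) ∪
      convexHull ℝ ((S.erase v : Finset E) : Set E) := by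
  obtain ⟨w, hw0, hw1, hwx⟩ := weights_of_mem_hull hx
  have hminv : 0 ≤ min (w v) (w (-v)) := le_min (hw0 v hv) (hw0 (-v) hnv)
  obtain ⟨w', h'0, h'1, h'x, h'v, h'nv⟩ :=
    transfer hv hnv h0S hvne hw0 hw1 hwx hminv (min_le_left _ _) (min_le_right _ _)
  rcases le_total (w (-v)) (w v) with hle | hle
  · left
    have hz : w' (-v) = 0 := by rw [h'nv, min_eq_right hle, sub_self]
    refine mem_hull_of_weights (fun y hy => h'0 y (Finset.mem_of_mem_erase hy)) ?_ ?_
    · rw [Finset.sum_erase _ hz]; exact h'1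
    · rw [Finset.sum_erase (f := fun y => w' y • y) _ (by simp [hz])]; exact h'x
  · right
    have hz : w' v = 0 := by rw [h'v, min_eq_left hle, sub_self]
    refine mem_hull_of_weights (fun y hy => h'0 y (Finset.mem_of_mem_erase hy)) ?_ ?_
    · rw [Finset.sum_erase _ hz]; exact h'1
    · rw [Finset.sum_erase (f := fun y => w' y • y) _ (by simp [hz])]; exact h'x

/-- Intersection: a point of both one-element-erased hulls lies in the hull with both
`v` and `-v` removed. -/
lemma inter_subset [DecidableEq E] {S : Finset E} (h0S : (0 : E) ∈ S)
    {v : E} (hv : v ∈ S) (hnv : -v ∈ S) (hvne : v ≠ 0) {x : E}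
    (hx1 : x ∈ convexHull ℝ ((S.erase (-v) : Finset E) : Set E))
    (hx2 : x ∈ convexHull ℝ ((S.erase v : Finset E) : Set E)) :
    x ∈ convexHull ℝ (((S.erase v).erase (-v) : Finset E) : Set E) := by
  obtain ⟨w1, hw10, hw11, hw1x⟩ := weights_of_mem_hull hx1
  obtain ⟨w2, hw20, hw21, hw2x⟩ := weights_of_mem_hull hx2
  set e1 : E → ℝ := fun y => if y ∈ S.erase (-v) then w1 y else 0 with he1
  set e2 : E → ℝ := fun y => if y ∈ S.erase v then w2 y else 0 with he2
  have he1sum : ∑ y ∈ S, e1 y = 1 := by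
    rw [he1, Finset.sum_ite_mem, Finset.inter_eq_right.2 (Finset.erase_subset _ _)]
    exact hw11
  have he2sum : ∑ y ∈ S, e2 y = 1 := by
    rw [he2, Finset.sum_ite_mem, Finset.inter_eq_right.2 (Finset.erase_subset _ _)]
    exact hw21
  have he1pos : ∀ y, y ∈ S.erase (-v) → e1 y = w1 y := fun y h => if_pos h
  have he1zero : ∀ y, y ∉ S.erase (-v) → e1 y = 0 := fun y h => if_neg h
  have he2pos : ∀ y, y ∈ S.erase v → e2 y = w2 y := fun y h => if_pos h
  have he2zero : ∀ y, y ∉ S.erase v → e2 y = 0 := fun y h => if_neg h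
  have he1vec : ∑ y ∈ S, e1 y • y = x := by
    have hc : ∀ y ∈ S, e1 y • y = (if y ∈ S.erase (-v) then w1 y • y else 0) := by
      intro y _
      by_cases h : y ∈ S.erase (-v)
      · rw [he1pos y h, if_pos h]
      · rw [he1zero y h, if_neg h, zero_smul]
    rw [Finset.sum_congr rfl hc, Finset.sum_ite_mem,
      Finset.inter_eq_right.2 (Finset.erase_subset _ _)]
    exact hw1x
  have he2vec : ∑ y ∈ S, e2 y • y = x := by
    have hc : ∀ y ∈ S, e2 y • y = (if y ∈ S.erase v then w2 y • y else 0) := by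
      intro y _
      by_cases h : y ∈ S.erase v
      · rw [he2pos y h, if_pos h]
      · rw [he2zero y h, if_neg h, zero_smul]
    rw [Finset.sum_congr rfl hc, Finset.sum_ite_mem,
      Finset.inter_eq_right.2 (Finset.erase_subset _ _)]
    exact hw2x
  have he10 : ∀ y ∈ S, 0 ≤ e1 y := by
    intro y _
    by_cases h : y ∈ S.erase (-v)
    · rw [he1pos y h]; exact hw10 y h
    · rw [he1zero y h]
  have he20 : ∀ y ∈ S, 0 ≤ e2 y := by
    intro y _
    by_cases h : y ∈ S.erase v
    · rw [he2pos y h]; exact hw20 y h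
    · rw [he2zero y h]
  have he1nv : e1 (-v) = 0 := he1zero _ (Finset.notMem_erase _ _)
  have he2v : e2 v = 0 := he2zero _ (Finset.notMem_erase _ _)
  have ha0 : 0 ≤ e1 v := he10 v hv
  have hb0 : 0 ≤ e2 (-v) := he20 (-v) hnv
  by_cases hab : e1 v + e2 (-v) = 0
  · have ha : e1 v = 0 := by linarith
    exact mem_double_erase hv hnv he10 he1sum he1vec ha he1nv
  · have habpos : 0 < e1 v + e2 (-v) := lt_of_le_of_ne (by linarith) (Ne.symm hab)
    set a := e1 v
    set b := e2 (-v)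
    set t : ℝ := b / (a + b) with ht
    have ht0 : 0 ≤ t := div_nonneg hb0 (le_of_lt habpos)
    have ht1 : t ≤ 1 := by rw [ht, div_le_one habpos]; linarith
    set wc : E → ℝ := fun y => t * e1 y + (1 - t) * e2 y with hwc
    have hwc0 : ∀ y ∈ S, 0 ≤ wc y := fun y hy =>
      add_nonneg (mul_nonneg ht0 (he10 y hy)) (mul_nonneg (by linarith) (he20 y hy))
    have hwcs : ∑ y ∈ S, wc y = 1 := by
      simp only [hwc]
      rw [Finset.sum_add_distrib, ← Finset.mul_sum, ← Finset.mul_sum, he1sum, he2sum]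
      ring
    have hwcx : ∑ y ∈ S, wc y • y = x := by
      have hc : ∀ y ∈ S, wc y • y = t • (e1 y • y) + (1 - t) • (e2 y • y) := by
        intro y _
        show (t * e1 y + (1 - t) * e2 y) • y = t • (e1 y • y) + (1 - t) • (e2 y • y)
        rw [add_smul, mul_smul, mul_smul]
      rw [Finset.sum_congr rfl hc, Finset.sum_add_distrib, ← Finset.smul_sum,
        ← Finset.smul_sum, he1vec, he2vec, ← add_smul]
      have : t + (1 - t) = 1 := by ring
      rw [this, one_smul]
    have hwcv : wc v = t * a := by
      show t * e1 v + (1 - t) * e2 v = t * a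
      rw [he2v]; ring
    have hwcnv : wc (-v) = (1 - t) * b := by
      show t * e1 (-v) + (1 - t) * e2 (-v) = (1 - t) * b
      rw [he1nv]; ring
    have htab : t * (a + b) = b := by
      rw [ht]; field_simp
    have hkey : (1 - t) * b = t * a := by nlinarith [htab]
    have hca : (0:ℝ) ≤ t * a := mul_nonneg ht0 ha0
    obtain ⟨w', h'0, h'1, h'x, h'v, h'nv⟩ :=
      transfer hv hnv h0S hvne hwc0 hwcs hwcx hca (le_of_eq hwcv.symm)
        (by rw [hwcnv, hkey])
    have hz1 : w' v = 0 := by rw [h'v, hwcv, sub_self]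
    have hz2 : w' (-v) = 0 := by rw [h'nv, hwcnv, hkey, sub_self]
    exact mem_double_erase hv hnv h'0 h'1 h'x hz1 hz2

/-- Minkowski sum identity for closed sets with convex union. -/
lemma add_eq_union_add_inter {n : ℕ} {A B : Set (Fin n → ℝ)}
    (hAc : IsClosed A) (hBc : IsClosed B) (hU : Convex ℝ (A ∪ B)) :
    A + B = (A ∪ B) + (A ∩ B) := by
  apply Set.Subset.antisymm
  · rintro x hx
    rw [Set.mem_add] at hx
    obtain ⟨a, ha, b, hb, rfl⟩ := hx
    set g : ℝ → (Fin n → ℝ) := fun t => (1 - t) • a + t • b with hg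
    have hgc : Continuous g := by
      apply Continuous.add
      · exact (continuous_const.sub continuous_id).smul continuous_const
      · exact continuous_id.smul continuous_const
    have hgmem : ∀ t, t ∈ Set.Icc (0:ℝ) 1 → g t ∈ A ∪ B := by
      intro t ht
      apply hU.segment_subset (Set.mem_union_left _ ha) (Set.mem_union_right _ hb)
      exact ⟨1 - t, t, by linarith [ht.2], ht.1, by ring, rfl⟩
    set T : Set ℝ := {t | t ∈ Set.Icc (0:ℝ) 1 ∧ g t ∈ A} with hTdef
    have hT0 : (0:ℝ) ∈ T := ⟨⟨le_refl _, zero_le_one⟩, by simpa [hg] using ha⟩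
    have hTbdd : BddAbove T := ⟨1, fun t ht => ht.1.2⟩
    have hTc : IsClosed T := by
      have : T = Set.Icc (0:ℝ) 1 ∩ g ⁻¹' A := rfl
      rw [this]
      exact isClosed_Icc.inter (hAc.preimage hgc)
    set t₀ : ℝ := sSup T with ht₀def
    have ht₀ : t₀ ∈ T := hTc.csSup_mem ⟨0, hT0⟩ hTbdd
    have ht₀B : g t₀ ∈ B := by
      rcases eq_or_lt_of_le ht₀.1.2 with h1 | h1
      · have : g t₀ = b := by rw [h1]; simp [hg]
        rw [this]; exact hb
      · have htend : Filter.Tendsto g (nhdsWithin t₀ (Set.Ioi t₀)) (nhds (g t₀)) :=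
          (hgc.tendsto t₀).mono_left nhdsWithin_le_nhds
        refine hBc.mem_of_tendsto htend ?_
        filter_upwards [Ioo_mem_nhdsGT_of_mem (Set.mem_Ico.2 ⟨le_refl _, h1⟩)] with t ht
        have htI : t ∈ Set.Icc (0:ℝ) 1 := ⟨le_trans ht₀.1.1 (le_of_lt ht.1), le_of_lt ht.2⟩
        have hnotA : g t ∉ A := by
          intro hgA
          have : t ≤ t₀ := le_csSup hTbdd ⟨htI, hgA⟩
          exact absurd this (not_le.2 ht.1)
        rcases hgmem t htI with h | h
        · exact absurd h hnotA
        · exact h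
    rw [Set.mem_add]
    refine ⟨g (1 - t₀), hgmem _ ⟨by linarith [ht₀.1.2], by linarith [ht₀.1.1]⟩,
      g t₀, ⟨ht₀.2, ht₀B⟩, ?_⟩
    simp only [hg]
    module
  · rintro x hx
    rw [Set.mem_add] at hx
    obtain ⟨p, hp, m, hm, rfl⟩ := hx
    rw [Set.mem_add]
    rcases hp with hpA | hpB
    · exact ⟨p, hpA, m, hm.2, rfl⟩
    · exact ⟨m, hm.1, p, hpB, add_comm m p⟩

/-- The key step identity: `A + (-A) = P + P'` where `A = conv (S \ {-v})` and
`P' = conv (S \ {v, -v})`. -/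
lemma step {n : ℕ} [DecidableEq (Fin n → ℝ)] {S : Finset (Fin n → ℝ)}
    (hsym : ∀ y ∈ S, -y ∈ S) (h0S : (0 : Fin n → ℝ) ∈ S)
    {v : Fin n → ℝ} (hv : v ∈ S) (hvne : v ≠ 0) :
    convexHull ℝ ((S.erase (-v) : Finset (Fin n → ℝ)) : Set (Fin n → ℝ)) +
      -(convexHull ℝ ((S.erase (-v) : Finset (Fin n → ℝ)) : Set (Fin n → ℝ))) =
    convexHull ℝ (S : Set (Fin n → ℝ)) +
      convexHull ℝ (((S.erase v).erase (-v) : Finset (Fin n → ℝ)) : Set (Fin n → ℝ)) := by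
  have hnv : -v ∈ S := hsym v hv
  have hsetneg : -(((S.erase (-v)) : Finset (Fin n → ℝ)) : Set (Fin n → ℝ))
      = ((S.erase v : Finset (Fin n → ℝ)) : Set (Fin n → ℝ)) := by
    ext x
    constructor
    · intro h
      rw [Set.mem_neg, Finset.mem_coe, Finset.mem_erase] at h
      refine Finset.mem_coe.2 (Finset.mem_erase.2 ⟨?_, ?_⟩)
      · intro he; exact h.1 (by rw [he])
      · have := hsym _ h.2; rwa [neg_neg] at this
    · intro h
      rw [Finset.mem_coe, Finset.mem_erase] at h
      rw [Set.mem_neg, Finset.mem_coe, Finset.mem_erase]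
      exact ⟨fun he => h.1 (neg_injective he), hsym _ h.2⟩
  have hAneg : -(convexHull ℝ ((S.erase (-v) : Finset (Fin n → ℝ)) : Set (Fin n → ℝ)))
      = convexHull ℝ ((S.erase v : Finset (Fin n → ℝ)) : Set (Fin n → ℝ)) := by
    rw [← convexHull_neg, hsetneg]
  rw [hAneg]
  have hU : (convexHull ℝ ((S.erase (-v) : Finset (Fin n → ℝ)) : Set (Fin n → ℝ)) ∪
      convexHull ℝ ((S.erase v : Finset (Fin n → ℝ)) : Set (Fin n → ℝ)))
      = convexHull ℝ (S : Set (Fin n → ℝ)) := by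
    apply Set.Subset.antisymm
    · apply Set.union_subset <;>
        exact convexHull_mono (Finset.coe_subset.2 (Finset.erase_subset _ _))
    · intro x hx
      exact cover h0S hv hnv hvne hx
  have hI : (convexHull ℝ ((S.erase (-v) : Finset (Fin n → ℝ)) : Set (Fin n → ℝ)) ∩
      convexHull ℝ ((S.erase v : Finset (Fin n → ℝ)) : Set (Fin n → ℝ)))
      = convexHull ℝ (((S.erase v).erase (-v) : Finset (Fin n → ℝ)) : Set (Fin n → ℝ)) := by
    apply Set.Subset.antisymm
    · rintro x ⟨h1, h2⟩
      exact inter_subset h0S hv hnv hvne h1 h2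
    · apply Set.subset_inter
      · apply convexHull_mono
        intro y hy
        rw [Finset.mem_coe, Finset.mem_erase] at hy
        exact Finset.mem_coe.2
          (Finset.mem_erase.2 ⟨hy.1, Finset.mem_of_mem_erase hy.2⟩)
      · exact convexHull_mono (Finset.coe_subset.2 (Finset.erase_subset _ _))
  have hclosed1 : IsClosed (convexHull ℝ ((S.erase (-v) : Finset (Fin n → ℝ)) : Set (Fin n → ℝ))) :=
    ((S.erase (-v)).finite_toSet.isCompact_convexHull (𝕜 := ℝ)).isClosed
  have hclosed2 : IsClosed (convexHull ℝ ((S.erase v : Finset (Fin n → ℝ)) : Set (Fin n → ℝ))) :=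
    ((S.erase v).finite_toSet.isCompact_convexHull (𝕜 := ℝ)).isClosed
  rw [add_eq_union_add_inter hclosed1 hclosed2 (hU ▸ convex_convexHull ℝ _), hU, hI]

/-- Main induction: symmetric integral finsets give norms up to stable equivalence. -/
lemma aux (n : ℕ) : ∀ (k : ℕ) (S : Finset (Fin n → ℝ)), S.card ≤ k →
    (∀ x ∈ S, ∀ i, ∃ m : ℤ, x i = (m : ℝ)) → (∀ x ∈ S, -x ∈ S) →
    (0 : Fin n → ℝ) ∈ S →
    ∃ Q R : Set (Fin n → ℝ), IsIntegralPolytope Q ∧ IsIntegralPolytope R ∧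
      convexHull ℝ (S : Set (Fin n → ℝ)) + Q + (-Q) = R + (-R) := by
  classical
  intro k
  induction k with
  | zero =>
    intro S hcard _ _ h0S
    have : 0 < S.card := Finset.card_pos.2 ⟨0, h0S⟩
    omega
  | succ k ih =>
    intro S hcard hint hsym h0S
    by_cases hall : ∀ v ∈ S, v = (0 : Fin n → ℝ)
    · -- S = {0}
      have hS : S = {0} := Finset.eq_singleton_iff_unique_mem.2 ⟨h0S, hall⟩
      have hzero : IsIntegralPolytope ({0} : Set (Fin n → ℝ)) := by
        refine ⟨{0}, Finset.singleton_nonempty _, ?_, ?_⟩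
        · intro x hx i
          rw [Finset.mem_singleton] at hx
          exact ⟨0, by simp [hx]⟩
        · simp [convexHull_singleton]
      refine ⟨{0}, {0}, hzero, hzero, ?_⟩
      rw [hS]
      simp [convexHull_singleton, Set.singleton_add_singleton, Set.neg_singleton]
    · push_neg at hall
      obtain ⟨v, hv, hvne⟩ := hall
      have hnv : -v ∈ S := hsym v hv
      have hvnv : v ≠ -v := ne_neg_of_ne_zero hvne
      have hnvv : -v ≠ v := fun h => hvnv h.symm
      set S' : Finset (Fin n → ℝ) := (S.erase v).erase (-v) with hS'
      have h0S' : (0 : Fin n → ℝ) ∈ S' := by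
        refine Finset.mem_erase.2 ⟨?_, Finset.mem_erase.2 ⟨?_, h0S⟩⟩
        · exact fun h => hvne (neg_eq_zero.1 h.symm)
        · exact fun h => hvne h.symm
      have hcard' : S'.card ≤ k := by
        have h1 : (S.erase v).card = S.card - 1 := Finset.card_erase_of_mem hv
        have h2 : S'.card = (S.erase v).card - 1 :=
          Finset.card_erase_of_mem (Finset.mem_erase.2 ⟨hnvv, hnv⟩)
        have h3 : 0 < (S.erase v).card :=
          Finset.card_pos.2 ⟨-v, Finset.mem_erase.2 ⟨hnvv, hnv⟩⟩
        omega
      have hint' : ∀ x ∈ S', ∀ i, ∃ m : ℤ, x i = (m : ℝ) := fun x hx =>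
        hint x (Finset.mem_of_mem_erase (Finset.mem_of_mem_erase hx))
      have hsym' : ∀ x ∈ S', -x ∈ S' := by
        intro x hx
        rcases Finset.mem_erase.1 hx with ⟨hx1, hx2⟩
        rcases Finset.mem_erase.1 hx2 with ⟨hx3, hx4⟩
        refine Finset.mem_erase.2 ⟨?_, Finset.mem_erase.2 ⟨?_, hsym x hx4⟩⟩
        · exact fun h => hx3 (neg_injective h)
        · exact fun h => hx1 (neg_eq_iff_eq_neg.1 h)
      obtain ⟨Q', R', hQ', hR', hid⟩ := ih S' hcard' hint' hsym' h0S'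
      set A : Set (Fin n → ℝ) :=
        convexHull ℝ ((S.erase (-v) : Finset (Fin n → ℝ)) : Set (Fin n → ℝ)) with hA
      have hstep : A + -A = convexHull ℝ (S : Set (Fin n → ℝ)) +
          convexHull ℝ (S' : Set (Fin n → ℝ)) := step hsym h0S hv hvne
      obtain ⟨TQ, hTQne, hTQint, hTQeq⟩ := hQ'
      refine ⟨R', A + Q', hR', ?_, ?_⟩
      · refine ⟨S.erase (-v) + TQ, ?_, ?_, ?_⟩
        · exact Finset.Nonempty.add ⟨v, Finset.mem_erase.2 ⟨hvnv, hv⟩⟩ hTQne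
        · intro x hx i
          rw [Finset.mem_add] at hx
          obtain ⟨y, hy, z, hz, rfl⟩ := hx
          obtain ⟨m1, hm1⟩ := hint y (Finset.mem_of_mem_erase hy) i
          obtain ⟨m2, hm2⟩ := hTQint z hz i
          refine ⟨m1 + m2, ?_⟩
          rw [Pi.add_apply, hm1, hm2]
          push_cast
          ring
        · rw [Finset.coe_add, convexHull_add, hA, hTQeq]
      · -- the set identity
        rw [neg_add_rev]
        calc convexHull ℝ (S : Set (Fin n → ℝ)) + R' + -R'
            = convexHull ℝ (S : Set (Fin n → ℝ)) + (R' + -R') := by rw [add_assoc]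
          _ = convexHull ℝ (S : Set (Fin n → ℝ)) +
              (convexHull ℝ (S' : Set (Fin n → ℝ)) + Q' + -Q') := by rw [hid]
          _ = (convexHull ℝ (S : Set (Fin n → ℝ)) + convexHull ℝ (S' : Set (Fin n → ℝ)))
              + (Q' + -Q') := j1 _ _ _ _
          _ = (A + -A) + (Q' + -Q') := by rw [hstep]
          _ = (A + Q') + (-Q' + -A) := j2 _ _ _ _

end SymNormAux

/-- Every symmetric integral polytope is a norm in the Grothendieck group of the
monoid of integral polytopes under Minkowski sum. -/
theorem symmetric_is_norm_in_grothendieck_group (n : ℕ) (P : Set (Fin n → ℝ))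
    (hP : IsIntegralPolytope P) (hsym : P = -P) :
    ∃ Q R : Set (Fin n → ℝ), IsIntegralPolytope Q ∧ IsIntegralPolytope R ∧
      P + Q + (-Q) = R + (-R) := by
  classical
  obtain ⟨S, hSne, hSint, hSeq⟩ := hP
  set St : Finset (Fin n → ℝ) := (S ∪ S.image (fun x => -x)) ∪ {0} with hSt
  have h0St : (0 : Fin n → ℝ) ∈ St := by simp [hSt]
  have hsymSt : ∀ x ∈ St, -x ∈ St := by
    intro x hx
    simp only [hSt, Finset.mem_union, Finset.mem_image, Finset.mem_singleton] at hx ⊢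
    rcases hx with (hx | ⟨y, hy, rfl⟩) | hx
    · exact Or.inl (Or.inr ⟨x, hx, rfl⟩)
    · exact Or.inl (Or.inl (by rwa [neg_neg]))
    · exact Or.inr (by rw [hx, neg_zero])
  have hintSt : ∀ x ∈ St, ∀ i, ∃ m : ℤ, x i = (m : ℝ) := by
    intro x hx i
    simp only [hSt, Finset.mem_union, Finset.mem_image, Finset.mem_singleton] at hx
    rcases hx with (hx | ⟨y, hy, rfl⟩) | hx
    · exact hSint x hx i
    · obtain ⟨m, hm⟩ := hSint y hy i
      refine ⟨-m, ?_⟩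
      rw [Pi.neg_apply, hm]
      push_cast
      ring
    · exact ⟨0, by simp [hx]⟩
  have hPconv : Convex ℝ P := by
    rw [hSeq]; exact convex_convexHull ℝ _
  have hnegmem : ∀ x, x ∈ P → -x ∈ P := by
    intro x hx
    have : -x ∈ -P := by rw [Set.mem_neg, neg_neg]; exact hx
    rwa [← hsym] at this
  have h0P : (0 : Fin n → ℝ) ∈ P := by
    obtain ⟨s0, hs0⟩ := hSne
    have h1 : s0 ∈ P := by
      rw [hSeq]; exact subset_convexHull ℝ _ (Finset.mem_coe.2 hs0)
    have h2 : -s0 ∈ P := hnegmem _ h1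
    have h3 := hPconv h1 h2 (by norm_num : (0:ℝ) ≤ 1/2) (by norm_num : (0:ℝ) ≤ 1/2)
      (by norm_num : (1/2:ℝ) + 1/2 = 1)
    have h4 : (1/2 : ℝ) • s0 + (1/2 : ℝ) • (-s0) = 0 := by module
    rwa [h4] at h3
  have hhull : convexHull ℝ (St : Set (Fin n → ℝ)) = P := by
    apply Set.Subset.antisymm
    · apply convexHull_min ?_ hPconv
      intro x hx
      rw [Finset.mem_coe] at hx
      simp only [hSt, Finset.mem_union, Finset.mem_image, Finset.mem_singleton] at hx
      rcases hx with (hx | ⟨y, hy, rfl⟩) | rfl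
      · rw [hSeq]; exact subset_convexHull ℝ _ (Finset.mem_coe.2 hx)
      · refine hnegmem _ ?_
        rw [hSeq]; exact subset_convexHull ℝ _ (Finset.mem_coe.2 hy)
      · exact h0P
    · rw [hSeq]
      apply convexHull_mono
      intro y hy
      rw [Finset.mem_coe] at hy ⊢
      simp only [hSt, Finset.mem_union]
      exact Or.inl (Or.inl hy)
  obtain ⟨Q, R, hQ, hR, hid⟩ := SymNormAux.aux n St.card St le_rfl hintSt hsymSt h0St
  rw [hhull] at hid
  exact ⟨Q, R, hQ, hR, hid⟩
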